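/- Let V, V₁, V₂, … and W, W₁, W₂, … be bounded measurable functions [0,1]² → ℝ with ‖Vₙ‖_∞ ≤ C for all n. If Vₙ → V and Wₙ → W in the cut norm, then Vₙ∘Wₙ → V∘W in the L¹ norm, where (V∘W)(x,y) = ∫₀¹ V(x,t)W(t,y)dt. -/

import Mathlib

open MeasureTheory Filter

/-- The cut norm of a kernel on `[0,1]²`. -/
noncomputable def cutNorm (W : ℝ → ℝ → ℝ) : ℝ :=
  sSup {r : ℝ | ∃ S T : Set ℝ, S ⊆ Set.Icc 0 1 ∧ T ⊆ Set.Icc 0 1 ∧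
    MeasurableSet S ∧ MeasurableSet T ∧
    r = |∫ x in S, ∫ y in T, W x y|}

/-- The operator product `(V ∘ W)(x,y) = ∫₀¹ V(x,t) W(t,y) dt`. -/
noncomputable def opProd (V W : ℝ → ℝ → ℝ) (x y : ℝ) : ℝ :=
  ∫ t in Set.Icc (0 : ℝ) 1, V x t * W t y

section Aux

local notation "I01" => Set.Icc (0:ℝ) 1

lemma volI01 : volume (Set.Icc (0:ℝ) 1) = 1 := by simp [Real.volume_Icc]

lemma finiteRestrict {S : Set ℝ} (hS : S ⊆ I01) : IsFiniteMeasure (volume.restrict S) := by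
  refine ⟨?_⟩
  rw [Measure.restrict_apply_univ]
  exact lt_of_le_of_lt (le_trans (measure_mono hS) volI01.le) ENNReal.one_lt_top

lemma int1 (f : ℝ → ℝ) (hf : Measurable f) (D : ℝ) (hbd : ∀ x, |f x| ≤ D)
    {S : Set ℝ} (hS : S ⊆ I01) : IntegrableOn f S := by
  haveI := finiteRestrict hS
  exact Integrable.mono' (integrable_const D) hf.aestronglyMeasurable
    (ae_of_all _ fun x => by simpa [Real.norm_eq_abs] using hbd x)

lemma int2 (f : ℝ → ℝ → ℝ) (hf : Measurable fun p : ℝ × ℝ => f p.1 p.2) (D : ℝ)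
    (hbd : ∀ x y, |f x y| ≤ D) {S T : Set ℝ} (hS : S ⊆ I01) (hT : T ⊆ I01) :
    Integrable (fun p : ℝ × ℝ => f p.1 p.2) ((volume.restrict S).prod (volume.restrict T)) := by
  haveI := finiteRestrict hS
  haveI := finiteRestrict hT
  exact Integrable.mono' (integrable_const D) hf.aestronglyMeasurable
    (ae_of_all _ fun p => by simpa [Real.norm_eq_abs] using hbd p.1 p.2)

lemma absInt_le (f : ℝ → ℝ) (hf : Measurable f) (D : ℝ) (hbd : ∀ x, |f x| ≤ D)
    {S : Set ℝ} (hS : S ⊆ I01) : |∫ x in S, f x| ≤ D := by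
  have hD : 0 ≤ D := le_trans (abs_nonneg _) (hbd 0)
  have h1 : |∫ x in S, f x| ≤ ∫ x in S, |f x| := by
    simpa [Real.norm_eq_abs] using norm_integral_le_integral_norm (μ := volume.restrict S) f
  have h2 : ∫ x in S, |f x| ≤ ∫ x in S, (D:ℝ) := by
    haveI := finiteRestrict hS
    exact integral_mono (int1 f hf D hbd hS).abs (integrable_const D) fun x => hbd x
  have h3 : ∫ x in S, (D:ℝ) = (volume S).toReal * D := by
    rw [setIntegral_const]; simp [smul_eq_mul]; exact Or.inl rfl
  have h4 : (volume S).toReal ≤ 1 := by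
    have h5 : volume S ≤ 1 := le_trans (measure_mono hS) volI01.le
    simpa using ENNReal.toReal_mono (by simp) h5
  calc |∫ x in S, f x| ≤ (volume S).toReal * D := by rw [← h3]; exact h1.trans h2
    _ ≤ 1 * D := mul_le_mul_of_nonneg_right h4 hD
    _ = D := one_mul D

lemma measInR (F : ℝ → ℝ → ℝ) (hF : Measurable fun p : ℝ × ℝ => F p.1 p.2) (x : ℝ) :
    Measurable fun y => F x y := hF.comp (measurable_const.prodMk measurable_id)

lemma measInL (F : ℝ → ℝ → ℝ) (hF : Measurable fun p : ℝ × ℝ => F p.1 p.2) (y : ℝ) :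
    Measurable fun x => F x y := hF.comp (measurable_id.prodMk measurable_const)

lemma cutNorm_bddAbove (U : ℝ → ℝ → ℝ) (hU : Measurable fun p : ℝ × ℝ => U p.1 p.2)
    (D : ℝ) (hbd : ∀ x y, |U x y| ≤ D) :
    D ∈ upperBounds {r : ℝ | ∃ S T : Set ℝ, S ⊆ Set.Icc 0 1 ∧ T ⊆ Set.Icc 0 1 ∧
      MeasurableSet S ∧ MeasurableSet T ∧ r = |∫ x in S, ∫ y in T, U x y|} := by
  rintro r ⟨S, T, hS, hT, hSm, hTm, rfl⟩
  have hmeas : Measurable fun x => ∫ y in T, U x y :=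
    (hU.stronglyMeasurable.integral_prod_right (ν := volume.restrict T)).measurable
  refine absInt_le _ hmeas D (fun x => ?_) hS
  exact absInt_le _ (measInR U hU x) D (fun y => hbd x y) hT

lemma le_cutNorm (U : ℝ → ℝ → ℝ) (hU : Measurable fun p : ℝ × ℝ => U p.1 p.2)
    (D : ℝ) (hbd : ∀ x y, |U x y| ≤ D) {S T : Set ℝ} (hS : S ⊆ I01) (hT : T ⊆ I01)
    (hSm : MeasurableSet S) (hTm : MeasurableSet T) :
    |∫ x in S, ∫ y in T, U x y| ≤ cutNorm U :=
  le_csSup ⟨D, cutNorm_bddAbove U hU D hbd⟩ ⟨S, T, hS, hT, hSm, hTm, rfl⟩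

lemma split_abs (f : ℝ → ℝ) (hf : Measurable f) (D : ℝ) (hbd : ∀ x, |f x| ≤ D) (K : ℝ)
    (hK : ∀ S : Set ℝ, S ⊆ I01 → MeasurableSet S → |∫ x in S, f x| ≤ K) :
    ∫ x in I01, |f x| ≤ 2 * K := by
  set Sp : Set ℝ := I01 ∩ {x | 0 ≤ f x} with hSp
  set Sm : Set ℝ := I01 ∩ {x | f x < 0} with hSm
  have hSpm : MeasurableSet Sp := measurableSet_Icc.inter (hf measurableSet_Ici)
  have hSmm : MeasurableSet Sm := measurableSet_Icc.inter (hf measurableSet_Iio)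
  have hSpsub : Sp ⊆ I01 := Set.inter_subset_left
  have hSmsub : Sm ⊆ I01 := Set.inter_subset_left
  have hdisj : Disjoint Sp Sm := by
    rw [Set.disjoint_left]
    rintro x ⟨-, hx⟩ ⟨-, hx'⟩
    simp only [Set.mem_setOf_eq] at hx hx'
    exact absurd hx' (not_lt.mpr hx)
  have hunion : Sp ∪ Sm = I01 := by
    rw [← Set.inter_union_distrib_left]
    have : {x : ℝ | 0 ≤ f x} ∪ {x | f x < 0} = Set.univ := by
      ext x; simp [le_or_gt]
    rw [this, Set.inter_univ]
  have hip : IntegrableOn (fun x => |f x|) Sp := (int1 f hf D hbd hSpsub).abs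
  have him : IntegrableOn (fun x => |f x|) Sm := (int1 f hf D hbd hSmsub).abs
  have h1 : ∫ x in I01, |f x| = (∫ x in Sp, |f x|) + ∫ x in Sm, |f x| := by
    rw [← hunion]
    exact setIntegral_union hdisj hSmm hip him
  have h2 : ∫ x in Sp, |f x| = ∫ x in Sp, f x :=
    setIntegral_congr_fun hSpm fun x hx => abs_of_nonneg hx.2
  have h3 : ∫ x in Sm, |f x| = - ∫ x in Sm, f x := by
    rw [← integral_neg]
    exact setIntegral_congr_fun hSmm fun x hx => abs_of_neg hx.2
  have h4 : ∫ x in Sp, f x ≤ K := (le_abs_self _).trans (hK Sp hSpsub hSpm)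
  have h5 : - ∫ x in Sm, f x ≤ K := (neg_le_abs _).trans (hK Sm hSmsub hSmm)
  rw [h1, h2, h3]; linarith

lemma core (h a : ℝ → ℝ) (hh : Measurable h) (D : ℝ) (hbd : ∀ t, |h t| ≤ D)
    (b : ℝ) (ha : Measurable a) (habd : ∀ t, |a t| ≤ b) (K : ℝ)
    (hK : ∀ T : Set ℝ, T ⊆ I01 → MeasurableSet T → |∫ t in T, h t| ≤ K) :
    |∫ t in I01, h t * a t| ≤ b * (2 * K) := by
  have hb : 0 ≤ b := le_trans (abs_nonneg _) (habd 0)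
  have hD : 0 ≤ D := le_trans (abs_nonneg _) (hbd 0)
  have hprodbd : ∀ t, |h t * a t| ≤ D * b := fun t => by
    rw [abs_mul]
    exact mul_le_mul (hbd t) (habd t) (abs_nonneg _) hD
  have h1 : |∫ t in I01, h t * a t| ≤ ∫ t in I01, |h t * a t| := by
    have := norm_integral_le_integral_norm (μ := volume.restrict I01) (fun t => h t * a t)
    simp only [Real.norm_eq_abs] at this
    exact this
  have h2 : ∫ t in I01, |h t * a t| ≤ ∫ t in I01, b * |h t| := by
    refine integral_mono (int1 _ (hh.mul ha) (D * b) hprodbd subset_rfl).abs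
      ((int1 h hh D hbd subset_rfl).abs.const_mul b) fun t => ?_
    rw [abs_mul, mul_comm]
    exact mul_le_mul_of_nonneg_right (habd t) (abs_nonneg _)
  have h3 : ∫ t in I01, b * |h t| = b * ∫ t in I01, |h t| := integral_const_mul b _
  have h4 : ∫ t in I01, |h t| ≤ 2 * K := split_abs h hh D hbd K hK
  calc |∫ t in I01, h t * a t| ≤ b * ∫ t in I01, |h t| := by
        rw [← h3]; exact h1.trans h2
    _ ≤ b * (2 * K) := mul_le_mul_of_nonneg_left h4 hb

/-- slice bound, deviation in left factor: for fixed `g`,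
`∫ x |∫ t U x t * g t| ≤ 4 b ‖U‖_□`. -/
lemma sliceQ (U : ℝ → ℝ → ℝ) (hU : Measurable fun p : ℝ × ℝ => U p.1 p.2) (DU : ℝ)
    (hUbd : ∀ x y, |U x y| ≤ DU) (g : ℝ → ℝ) (hg : Measurable g) (b : ℝ)
    (hgb : ∀ t, |g t| ≤ b) :
    ∫ x in I01, |∫ t in I01, U x t * g t| ≤ 2 * (b * (2 * cutNorm U)) := by
  have hDU : 0 ≤ DU := le_trans (abs_nonneg _) (hUbd 0 0)
  have hb : 0 ≤ b := le_trans (abs_nonneg _) (hgb 0)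
  have hmul : Measurable fun p : ℝ × ℝ => U p.1 p.2 * g p.2 := hU.mul (hg.comp measurable_snd)
  have hum : StronglyMeasurable (Function.uncurry fun x t => U x t * g t) :=
    Measurable.stronglyMeasurable hmul
  have hfm : Measurable fun x => ∫ t in I01, U x t * g t :=
    hum.integral_prod_right.measurable
  have hprodbd : ∀ x t, |U x t * g t| ≤ DU * b := fun x t => by
    rw [abs_mul]; exact mul_le_mul (hUbd x t) (hgb t) (abs_nonneg _) hDU
  refine split_abs _ hfm (DU * b)
    (fun x => absInt_le _ ((measInR U hU x).mul hg) (DU * b) (hprodbd x) subset_rfl)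
    (b * (2 * cutNorm U)) (fun S hS hSm => ?_)
  have hswap : ∫ x in S, ∫ t in I01, U x t * g t = ∫ t in I01, ∫ x in S, U x t * g t :=
    integral_integral_swap (int2 (fun x t => U x t * g t) hmul (DU * b) hprodbd hS subset_rfl)
  have hpull : ∫ t in I01, ∫ x in S, U x t * g t
      = ∫ t in I01, (∫ x in S, U x t) * g t :=
    setIntegral_congr_fun measurableSet_Icc fun t _ => integral_mul_const (g t) _
  rw [hswap, hpull]
  refine core _ g
    ((hU.stronglyMeasurable.integral_prod_left (μ := volume.restrict S)).measurable) DU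
    (fun t => absInt_le _ (measInL U hU t) DU (fun x => hUbd x t) hS)
    b hg hgb (cutNorm U) (fun T hT hTm => ?_)
  have hswap2 : ∫ t in T, ∫ x in S, U x t = ∫ x in S, ∫ t in T, U x t :=
    integral_integral_swap (int2 (fun t x => U x t) (hU.comp measurable_swap) DU
      (fun t x => hUbd x t) hT hS)
  rw [hswap2]
  exact le_cutNorm U hU DU hUbd hS hT hSm hTm

/-- slice bound, deviation in right factor: for fixed `a`,
`∫ y |∫ t a t * Z t y| ≤ 4 C ‖Z‖_□`. -/
lemma sliceP (Z : ℝ → ℝ → ℝ) (hZ : Measurable fun p : ℝ × ℝ => Z p.1 p.2) (DZ : ℝ)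
    (hZbd : ∀ x y, |Z x y| ≤ DZ) (a : ℝ → ℝ) (ha : Measurable a) (C : ℝ)
    (hab : ∀ t, |a t| ≤ C) :
    ∫ y in I01, |∫ t in I01, a t * Z t y| ≤ 2 * (C * (2 * cutNorm Z)) := by
  have hDZ : 0 ≤ DZ := le_trans (abs_nonneg _) (hZbd 0 0)
  have hC : 0 ≤ C := le_trans (abs_nonneg _) (hab 0)
  have hmul : Measurable fun p : ℝ × ℝ => a p.2 * Z p.2 p.1 :=
    (ha.comp measurable_snd).mul (hZ.comp (measurable_snd.prodMk measurable_fst))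
  have hum : StronglyMeasurable (Function.uncurry fun y t => a t * Z t y) :=
    Measurable.stronglyMeasurable hmul
  have hfm : Measurable fun y => ∫ t in I01, a t * Z t y :=
    hum.integral_prod_right.measurable
  have hprodbd : ∀ y t, |a t * Z t y| ≤ C * DZ := fun y t => by
    rw [abs_mul]; exact mul_le_mul (hab t) (hZbd t y) (abs_nonneg _) hC
  refine split_abs _ hfm (C * DZ)
    (fun y => absInt_le _ (ha.mul (measInL Z hZ y)) (C * DZ) (hprodbd y) subset_rfl)
    (C * (2 * cutNorm Z)) (fun T hT hTm => ?_)
  have hswap : ∫ y in T, ∫ t in I01, a t * Z t y = ∫ t in I01, ∫ y in T, a t * Z t y :=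
    integral_integral_swap (int2 (fun y t => a t * Z t y) hmul (C * DZ) hprodbd hT subset_rfl)
  have hpull : ∫ t in I01, ∫ y in T, a t * Z t y
      = ∫ t in I01, (∫ y in T, Z t y) * a t :=
    setIntegral_congr_fun measurableSet_Icc fun t _ => by
      rw [integral_const_mul, mul_comm]
  rw [hswap, hpull]
  refine core _ a
    ((hZ.stronglyMeasurable.integral_prod_right (ν := volume.restrict T)).measurable) DZ
    (fun t => absInt_le _ (measInR Z hZ t) DZ (fun y => hZbd t y) hT)
    C ha hab (cutNorm Z) (fun T' hT' hT'm => le_cutNorm Z hZ DZ hZbd hT' hT hT'm hTm)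

lemma outer_le (F : ℝ → ℝ) (M : ℝ) (h1 : ∀ y, 0 ≤ F y) (h2 : ∀ y, F y ≤ M) :
    ∫ y in I01, F y ≤ M := by
  haveI := finiteRestrict (subset_rfl : I01 ⊆ I01)
  have h3 : ‖∫ y in I01, F y‖ ≤ M * ((volume.restrict I01) Set.univ).toReal :=
    norm_integral_le_of_norm_le_const (ae_of_all _ fun y => by
      rw [Real.norm_eq_abs, abs_of_nonneg (h1 y)]; exact h2 y)
  rw [Real.norm_eq_abs, Measure.restrict_apply_univ, volI01] at h3
  simpa using (le_abs_self _).trans h3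

end Aux

theorem stmt7 (V : ℝ → ℝ → ℝ) (Vn : ℕ → ℝ → ℝ → ℝ)
    (W : ℝ → ℝ → ℝ) (Wn : ℕ → ℝ → ℝ → ℝ) (C : ℝ)
    (hVmeas : Measurable fun p : ℝ × ℝ => V p.1 p.2)
    (hVnmeas : ∀ n, Measurable fun p : ℝ × ℝ => Vn n p.1 p.2)
    (hWmeas : Measurable fun p : ℝ × ℝ => W p.1 p.2)
    (hWnmeas : ∀ n, Measurable fun p : ℝ × ℝ => Wn n p.1 p.2)
    (hVbd : ∃ D, ∀ x y, |V x y| ≤ D)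
    (hWbd : ∃ D, ∀ x y, |W x y| ≤ D)
    (hWnbd : ∀ n, ∃ D, ∀ x y, |Wn n x y| ≤ D)
    (hVnC : ∀ n x y, |Vn n x y| ≤ C)
    (hVconv : Tendsto (fun n => cutNorm (fun x y => Vn n x y - V x y)) atTop (nhds 0))
    (hWconv : Tendsto (fun n => cutNorm (fun x y => Wn n x y - W x y)) atTop (nhds 0)) :
    Tendsto (fun n => ∫ x in Set.Icc (0:ℝ) 1, ∫ y in Set.Icc (0:ℝ) 1,
      |opProd (Vn n) (Wn n) x y - opProd V W x y|) atTop (nhds 0) := by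
  obtain ⟨DV, hDV⟩ := hVbd
  obtain ⟨DW, hDW⟩ := hWbd
  have hC : 0 ≤ C := le_trans (abs_nonneg _) (hVnC 0 0 0)
  have hDW0 : 0 ≤ DW := le_trans (abs_nonneg _) (hDW 0 0)
  set I01 : Set ℝ := Set.Icc (0:ℝ) 1 with hI01
  set g : ℕ → ℝ := fun n => 2 * (C * (2 * cutNorm (fun x y => Wn n x y - W x y)))
      + 2 * (DW * (2 * cutNorm (fun x y => Vn n x y - V x y))) with hg
  -- nonnegativity of the integrals
  have hnonneg : ∀ n, 0 ≤ ∫ x in I01, ∫ y in I01,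
      |opProd (Vn n) (Wn n) x y - opProd V W x y| := fun n =>
    setIntegral_nonneg measurableSet_Icc fun x _ =>
      setIntegral_nonneg measurableSet_Icc fun y _ => abs_nonneg _
  have hbound : ∀ n, (∫ x in I01, ∫ y in I01,
      |opProd (Vn n) (Wn n) x y - opProd V W x y|) ≤ g n := by
    intro n
    obtain ⟨DWn, hDWn⟩ := hWnbd n
    have hDWn0 : 0 ≤ DWn := le_trans (abs_nonneg _) (hDWn 0 0)
    set Z : ℝ → ℝ → ℝ := fun x y => Wn n x y - W x y with hZ
    set U : ℝ → ℝ → ℝ := fun x y => Vn n x y - V x y with hU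
    have hZm : Measurable fun p : ℝ × ℝ => Z p.1 p.2 := (hWnmeas n).sub hWmeas
    have hUm : Measurable fun p : ℝ × ℝ => U p.1 p.2 := (hVnmeas n).sub hVmeas
    have hZbd : ∀ x y, |Z x y| ≤ DWn + DW := fun x y =>
      (abs_sub _ _).trans (add_le_add (hDWn x y) (hDW x y))
    have hUbd : ∀ x y, |U x y| ≤ C + DV := fun x y =>
      (abs_sub _ _).trans (add_le_add (hVnC n x y) (hDV x y))
    set P : ℝ → ℝ → ℝ := fun x y => ∫ t in I01, Vn n x t * Z t y with hP
    set Q : ℝ → ℝ → ℝ := fun x y => ∫ t in I01, U x t * W t y with hQ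
    -- pointwise decomposition
    have hdecomp : ∀ x y, opProd (Vn n) (Wn n) x y - opProd V W x y = P x y + Q x y := by
      intro x y
      have i1 : IntegrableOn (fun t => Vn n x t * Wn n t y) I01 :=
        int1 _ ((measInR _ (hVnmeas n) x).mul (measInL _ (hWnmeas n) y)) (C * DWn)
          (fun t => by rw [Pi.mul_apply, abs_mul]; exact mul_le_mul (hVnC n x t) (hDWn t y) (abs_nonneg _) hC)
          subset_rfl
      have i2 : IntegrableOn (fun t => Vn n x t * W t y) I01 :=
        int1 _ ((measInR _ (hVnmeas n) x).mul (measInL _ hWmeas y)) (C * DW)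
          (fun t => by rw [Pi.mul_apply, abs_mul]; exact mul_le_mul (hVnC n x t) (hDW t y) (abs_nonneg _) hC)
          subset_rfl
      have i3 : IntegrableOn (fun t => V x t * W t y) I01 :=
        int1 _ ((measInR _ hVmeas x).mul (measInL _ hWmeas y)) (DV * DW)
          (fun t => by
            rw [Pi.mul_apply, abs_mul]
            exact mul_le_mul (hDV x t) (hDW t y) (abs_nonneg _)
              (le_trans (abs_nonneg _) (hDV 0 0)))
          subset_rfl
      have e1 : P x y = (∫ t in I01, Vn n x t * Wn n t y) - ∫ t in I01, Vn n x t * W t y := by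
        rw [← integral_sub i1 i2]
        exact setIntegral_congr_fun measurableSet_Icc fun t _ => by simp [hZ]; ring
      have e2 : Q x y = (∫ t in I01, Vn n x t * W t y) - ∫ t in I01, V x t * W t y := by
        rw [← integral_sub i2 i3]
        exact setIntegral_congr_fun measurableSet_Icc fun t _ => by simp [hU]; ring
      rw [opProd, opProd, e1, e2]; ring
    -- measurability of P, Q as pair functions
    have hPm : Measurable fun p : ℝ × ℝ => P p.1 p.2 := by
      have : Measurable (Function.uncurry fun (p : ℝ × ℝ) t => Vn n p.1 t * Z t p.2) :=
        ((hVnmeas n).comp ((measurable_fst.comp measurable_fst).prodMk measurable_snd)).mul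
          (hZm.comp (measurable_snd.prodMk (measurable_snd.comp measurable_fst)))
      exact (Measurable.stronglyMeasurable this).integral_prod_right.measurable
    have hQm : Measurable fun p : ℝ × ℝ => Q p.1 p.2 := by
      have : Measurable (Function.uncurry fun (p : ℝ × ℝ) t => U p.1 t * W t p.2) :=
        (hUm.comp ((measurable_fst.comp measurable_fst).prodMk measurable_snd)).mul
          (hWmeas.comp (measurable_snd.prodMk (measurable_snd.comp measurable_fst)))
      exact (Measurable.stronglyMeasurable this).integral_prod_right.measurable
    have hPbd : ∀ x y, |P x y| ≤ C * (DWn + DW) := fun x y =>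
      absInt_le _ ((measInR _ (hVnmeas n) x).mul (measInL _ hZm y)) _
        (fun t => by
          rw [Pi.mul_apply, abs_mul]
          exact mul_le_mul (hVnC n x t) (hZbd t y) (abs_nonneg _) hC) subset_rfl
    have hQbd : ∀ x y, |Q x y| ≤ (C + DV) * DW := fun x y =>
      absInt_le _ ((measInR _ hUm x).mul (measInL _ hWmeas y)) _
        (fun t => by
          rw [Pi.mul_apply, abs_mul]
          exact mul_le_mul (hUbd x t) (hDW t y) (abs_nonneg _)
            (le_trans (abs_nonneg _) (hUbd 0 0))) subset_rfl
    set DD : ℝ := C * (DWn + DW) + (C + DV) * DW with hDD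
    have hDiffbd : ∀ x y, |opProd (Vn n) (Wn n) x y - opProd V W x y| ≤ DD := fun x y => by
      rw [hdecomp x y]
      exact (abs_add_le _ _).trans (add_le_add (hPbd x y) (hQbd x y))
    have hDiffm : Measurable fun p : ℝ × ℝ =>
        opProd (Vn n) (Wn n) p.1 p.2 - opProd V W p.1 p.2 := by
      have : (fun p : ℝ × ℝ => opProd (Vn n) (Wn n) p.1 p.2 - opProd V W p.1 p.2)
          = fun p : ℝ × ℝ => P p.1 p.2 + Q p.1 p.2 := by
        funext p; exact hdecomp p.1 p.2
      rw [this]; exact hPm.add hQm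
    -- pass to the product measure
    have iDiff : Integrable (fun p : ℝ × ℝ =>
        |opProd (Vn n) (Wn n) p.1 p.2 - opProd V W p.1 p.2|) ((volume.restrict I01).prod (volume.restrict I01)) :=
      int2 _ hDiffm.abs DD (fun x y => by
        rw [abs_abs]; exact hDiffbd x y) subset_rfl subset_rfl
    have iP : Integrable (fun p : ℝ × ℝ => |P p.1 p.2|) ((volume.restrict I01).prod (volume.restrict I01)) :=
      int2 _ hPm.abs (C * (DWn + DW)) (fun x y => by rw [abs_abs]; exact hPbd x y) subset_rfl subset_rfl
    have iQ : Integrable (fun p : ℝ × ℝ => |Q p.1 p.2|) ((volume.restrict I01).prod (volume.restrict I01)) :=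
      int2 _ hQm.abs ((C + DV) * DW) (fun x y => by rw [abs_abs]; exact hQbd x y) subset_rfl subset_rfl
    have step1 : (∫ x in I01, ∫ y in I01, |opProd (Vn n) (Wn n) x y - opProd V W x y|)
        = ∫ p, |opProd (Vn n) (Wn n) p.1 p.2 - opProd V W p.1 p.2| ∂((volume.restrict I01).prod (volume.restrict I01)) := by
      exact integral_integral
        (f := fun x y => |opProd (Vn n) (Wn n) x y - opProd V W x y|) iDiff
    have step2 : (∫ p, |opProd (Vn n) (Wn n) p.1 p.2 - opProd V W p.1 p.2| ∂((volume.restrict I01).prod (volume.restrict I01)))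
        ≤ ∫ p, (|P p.1 p.2| + |Q p.1 p.2|) ∂((volume.restrict I01).prod (volume.restrict I01)) := by
      refine integral_mono iDiff (iP.add iQ) fun p => ?_
      simp only
      rw [hdecomp p.1 p.2]
      exact abs_add_le _ _
    have step3 : (∫ p, (|P p.1 p.2| + |Q p.1 p.2|) ∂((volume.restrict I01).prod (volume.restrict I01)))
        = (∫ p, |P p.1 p.2| ∂((volume.restrict I01).prod (volume.restrict I01))) + ∫ p, |Q p.1 p.2| ∂((volume.restrict I01).prod (volume.restrict I01)) := integral_add iP iQ
    -- bound for the P part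
    have hPdouble : (∫ p, |P p.1 p.2| ∂((volume.restrict I01).prod (volume.restrict I01)))
        ≤ 2 * (C * (2 * cutNorm Z)) := by
      have e : (∫ p, |P p.1 p.2| ∂((volume.restrict I01).prod (volume.restrict I01))) = ∫ x in I01, ∫ y in I01, |P x y| := by
        exact (integral_integral (f := fun x y => |P x y|) iP).symm
      rw [e]
      refine outer_le _ _ (fun x => setIntegral_nonneg measurableSet_Icc fun y _ => abs_nonneg _)
        (fun x => ?_)
      have := sliceP Z hZm (DWn + DW) hZbd (fun t => Vn n x t) (measInR _ (hVnmeas n) x)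
        C (fun t => hVnC n x t)
      simpa [hP] using this
    -- bound for the Q part (swap order of integration first)
    have hQdouble : (∫ p, |Q p.1 p.2| ∂((volume.restrict I01).prod (volume.restrict I01)))
        ≤ 2 * (DW * (2 * cutNorm U)) := by
      have hswap : (∫ p, |Q p.1 p.2| ∂((volume.restrict I01).prod (volume.restrict I01))) = ∫ y in I01, ∫ x in I01, |Q x y| := by
        have e : (∫ p, |Q p.1 p.2| ∂((volume.restrict I01).prod (volume.restrict I01))) = ∫ x in I01, ∫ y in I01, |Q x y| := by
          exact (integral_integral (f := fun x y => |Q x y|) iQ).symm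
        rw [e]
        exact integral_integral_swap (f := fun x y => |Q x y|) iQ
      rw [hswap]
      refine outer_le _ _ (fun y => setIntegral_nonneg measurableSet_Icc fun x _ => abs_nonneg _)
        (fun y => ?_)
      have := sliceQ U hUm (C + DV) hUbd (fun t => W t y) (measInL _ hWmeas y)
        DW (fun t => hDW t y)
      simpa [hQ] using this
    calc (∫ x in I01, ∫ y in I01, |opProd (Vn n) (Wn n) x y - opProd V W x y|)
        = ∫ p, |opProd (Vn n) (Wn n) p.1 p.2 - opProd V W p.1 p.2| ∂((volume.restrict I01).prod (volume.restrict I01)) := step1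
      _ ≤ (∫ p, |P p.1 p.2| ∂((volume.restrict I01).prod (volume.restrict I01))) + ∫ p, |Q p.1 p.2| ∂((volume.restrict I01).prod (volume.restrict I01)) := by
          rw [← step3]; exact step2
      _ ≤ 2 * (C * (2 * cutNorm Z)) + 2 * (DW * (2 * cutNorm U)) :=
          add_le_add hPdouble hQdouble
      _ = g n := by simp only [hg, hZ, hU]
  have hgto : Tendsto g atTop (nhds 0) := by
    rw [hg]
    have h1 : Tendsto (fun n => 2 * (C * (2 * cutNorm (fun x y => Wn n x y - W x y))))
        atTop (nhds 0) := by
      simpa using ((hWconv.const_mul 2).const_mul C).const_mul 2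
    have h2 : Tendsto (fun n => 2 * (DW * (2 * cutNorm (fun x y => Vn n x y - V x y))))
        atTop (nhds 0) := by
      simpa using ((hVconv.const_mul 2).const_mul DW).const_mul 2
    simpa using h1.add h2
  exact squeeze_zero hnonneg hbound hgto
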